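/- The infinite series ∑_{n=0}^∞ 1/(1 + n(n+1)/2) converges and equals (2π/√7)·tanh(√7·π/2). -/

import Mathlib

open Real MeasureTheory

noncomputable section
namespace LevineAux

instance : Fact ((0:ℝ) < 1) := ⟨one_pos⟩

/-- the periodic function 2cosh(2πb(x-1/2)) -/
def F (b : ℝ) (x : ℝ) : ℂ :=
  Complex.exp ((2*π*b*(x - 1/2) : ℝ)) + Complex.exp ((-(2*π*b*(x - 1/2)) : ℝ))

lemma F_cont (b : ℝ) : Continuous (F b) := by
  unfold F; fun_prop

lemma F_per (b : ℝ) : F b 0 = F b 1 := by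
  unfold F
  rw [add_comm]
  norm_num

def G (b : ℝ) : C(AddCircle (1:ℝ), ℂ) :=
  ⟨AddCircle.liftIco (1:ℝ) 0 (F b),
    AddCircle.liftIco_zero_continuous (by rw [F_per b]) (F_cont b).continuousOn⟩

def K (b : ℝ) (n : ℤ) : ℝ := 2*b*Real.sinh (π*b) / (π*(b^2+(n:ℝ)^2))

lemma coeff (b : ℝ) (hb : 0 < b) (n : ℤ) :
    fourierCoeff (⇑(G b)) n = (K b n : ℂ) := by
  rw [show (⇑(G b)) = AddCircle.liftIco (1:ℝ) 0 (F b) from rfl, fourierCoeff_liftIco_eq,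
    fourierCoeffOn_eq_integral]
  simp only [fourier_coe_apply, smul_eq_mul]
  norm_num
  have hπ : (π:ℝ) ≠ 0 := Real.pi_ne_zero
  set d1 : ℂ := (2*π*b : ℝ) - 2*π*Complex.I*n with hd1def
  set d2 : ℂ := -(2*π*b : ℝ) - 2*π*Complex.I*n with hd2def
  have hre1 : d1.re = 2*π*b := by simp [hd1def]
  have hre2 : d2.re = -(2*π*b) := by simp [hd2def]
  have hπb : 0 < 2*π*b := by positivity
  have hd1 : d1 ≠ 0 := fun h => by rw [h] at hre1; simp at hre1; rcases hre1 with h'|h' <;> simp_all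
  have hd2 : d2 ≠ 0 := fun h => by rw [h] at hre2; simp at hre2; rcases hre2 with h'|h' <;> simp_all [hb.ne']
  have key : ∀ x : ℝ, Complex.exp (-(2 * ↑π * Complex.I * ↑n * ↑x)) * F b x
      = Complex.exp ((-(π*b) : ℝ)) * Complex.exp (d1 * x)
        + Complex.exp ((π*b : ℝ)) * Complex.exp (d2 * x) := by
    intro x
    unfold F
    rw [mul_add, ← Complex.exp_add, ← Complex.exp_add, ← Complex.exp_add, ← Complex.exp_add]
    congr 1 <;> · congr 1; push_cast [hd1def, hd2def]; ring
  have int1 : IntervalIntegrable (fun x:ℝ => Complex.exp ((-(π*b) : ℝ)) * Complex.exp (d1 * ↑x)) volume 0 1 :=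
    Continuous.intervalIntegrable (by fun_prop) _ _
  have int2 : IntervalIntegrable (fun x:ℝ => Complex.exp ((π*b : ℝ)) * Complex.exp (d2 * ↑x)) volume 0 1 :=
    Continuous.intervalIntegrable (by fun_prop) _ _
  rw [intervalIntegral.integral_congr (fun x _ => key x),
    intervalIntegral.integral_add int1 int2,
    intervalIntegral.integral_const_mul, intervalIntegral.integral_const_mul,
    integral_exp_mul_complex hd1, integral_exp_mul_complex hd2]
  simp only [← Complex.ofReal_exp, Complex.ofReal_one, Complex.ofReal_zero, mul_one, mul_zero, Complex.exp_zero]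
  have e1 : Complex.exp d1 = ((Real.exp (2*π*b) : ℝ) : ℂ) := by
    rw [hd1def, Complex.exp_sub, show ((2:ℂ)*↑π*Complex.I*↑n) = (n:ℂ) * (2*↑π*Complex.I) by ring,
      Complex.exp_int_mul_two_pi_mul_I, div_one, Complex.ofReal_exp]
  have e2 : Complex.exp d2 = ((Real.exp (-(2*π*b)) : ℝ) : ℂ) := by
    rw [hd2def, Complex.exp_sub, show ((2:ℂ)*↑π*Complex.I*↑n) = (n:ℂ) * (2*↑π*Complex.I) by ring,
      Complex.exp_int_mul_two_pi_mul_I, div_one, Complex.ofReal_exp]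
    norm_cast
  rw [e1, e2]
  have hdd : d1 * d2 = -(4*π^2*((b:ℂ)^2+(n:ℂ)^2)) := by
    rw [hd1def, hd2def]
    push_cast
    linear_combination (4*(π:ℂ)^2*(n:ℂ)^2) * Complex.I_sq
  have hne : ((π:ℂ)*((b:ℂ)^2+(n:ℂ)^2)) ≠ 0 := by
    have : (0:ℝ) < π*(b^2+(n:ℝ)^2) := by positivity
    intro h
    rw [show ((π:ℂ)*((b:ℂ)^2+(n:ℂ)^2)) = ((π*(b^2+(n:ℝ)^2) : ℝ) : ℂ) by push_cast; ring] at h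
    exact_mod_cast this.ne' (by exact_mod_cast h)
  have hsum : 1/d1 - 1/d2 = (b:ℂ)/(π*((b:ℂ)^2+(n:ℂ)^2)) := by
    rw [div_sub_div _ _ hd1 hd2, hdd]
    rw [hd1def, hd2def]
    have h4 : (-(4*(π:ℂ)^2*((b:ℂ)^2+(n:ℂ)^2))) ≠ 0 := by
      intro h
      apply hne
      have : (4*(π:ℂ)) * ((π:ℂ)*((b:ℂ)^2+(n:ℂ)^2)) = 0 := by linear_combination -h
      rcases mul_eq_zero.mp this with h' | h'
      · exfalso; simp at h'
      · exact h'
    field_simp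
    push_cast
    ring
  have hu2 : ((Real.exp (2*π*b) : ℝ) : ℂ) = ((Real.exp (π*b):ℝ):ℂ) * ((Real.exp (π*b):ℝ):ℂ) := by
    rw [← Complex.ofReal_mul, ← Real.exp_add, show π*b + π*b = 2*π*b by ring]
  have hv2 : ((Real.exp (-(2*π*b)) : ℝ) : ℂ) = ((Real.exp (-(π*b)):ℝ):ℂ) * ((Real.exp (-(π*b)):ℝ):ℂ) := by
    rw [← Complex.ofReal_mul, ← Real.exp_add, show -(π*b) + -(π*b) = -(2*π*b) by ring]
  have h3 : ((Real.exp (π*b):ℝ):ℂ) * ((Real.exp (-(π*b)):ℝ):ℂ) = 1 := by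
    rw [← Complex.ofReal_mul, ← Real.exp_add]
    norm_num
  calc ↑(Real.exp (-(π*b))) * ((↑(Real.exp (2*π*b)) - 1) / d1)
        + ↑(Real.exp (π*b)) * ((↑(Real.exp (-(2*π*b))) - 1) / d2)
      = ((Real.exp (π*b) : ℂ) - (Real.exp (-(π*b)) : ℂ)) * (1/d1 - 1/d2) := by
        rw [hu2, hv2]
        linear_combination (((Real.exp (π*b):ℝ):ℂ)/d1 + ((Real.exp (-(π*b)):ℝ):ℂ)/d2) * h3
    _ = (K b n : ℂ) := by
        rw [hsum, K, Real.sinh_eq]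
        push_cast
        field_simp


lemma base_summable (r : ℝ) (hr : 0 < r) : Summable (fun n : ℕ => 1/((n:ℝ)^2+r)) := by
  have h0 : Summable (fun n : ℕ => 1/((n:ℝ))^2) := summable_one_div_nat_pow.mpr one_lt_two
  have h1 : Summable (fun n : ℕ => (4+1/r) / (((n:ℕ):ℝ)+1)^2) := by
    have := ((_root_.summable_nat_add_iff 1).mpr h0).mul_left (4+1/r)
    refine this.congr fun n => ?_
    push_cast
    rw [mul_one_div]
  refine Summable.of_nonneg_of_le (fun n => by positivity) (fun n => ?_) h1
  rw [div_le_div_iff₀ (by positivity) (by positivity), one_mul]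
  rcases Nat.eq_zero_or_pos n with h | h
  · subst h
    norm_num
    rw [add_mul]
    have : r⁻¹ * r = 1 := inv_mul_cancel₀ hr.ne'
    nlinarith
  · have hn : (1:ℝ) ≤ (n:ℝ) := by exact_mod_cast h
    have h1r : 0 < 1/r := by positivity
    nlinarith

lemma summable_K (b : ℝ) (hb : 0 < b) : Summable (fun n : ℤ => K b n) := by
  have hb2 : (0:ℝ) < b^2 := by positivity
  have h0 : Summable (fun n : ℕ => 1/((n:ℝ)^2+b^2)) := LevineAux.base_summable _ hb2
  have C := 2*b*Real.sinh (π*b)/π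
  apply Summable.of_nat_of_neg_add_one
  · refine ((h0.mul_left (2*b*Real.sinh (π*b)/π)).congr fun n => ?_)
    unfold K
    rw [div_mul_div_comm]
    push_cast
    ring_nf
  · have h1 : Summable (fun n : ℕ => 1/((((n:ℕ):ℝ)+1)^2+b^2)) := by
      refine ((_root_.summable_nat_add_iff 1).mpr h0).congr fun n => ?_
      push_cast
      ring_nf
    refine ((h1.mul_left (2*b*Real.sinh (π*b)/π)).congr fun n => ?_)
    unfold K
    rw [div_mul_div_comm]
    push_cast
    ring_nf

lemma hasSum_at0 (b : ℝ) (hb : 0 < b) :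
    HasSum (fun n : ℤ => ((K b n : ℝ) : ℂ)) ((2*Real.cosh (π*b) : ℝ) : ℂ) := by
  have hsum : Summable (fourierCoeff (⇑(G b))) := by
    rw [funext (coeff b hb)]
    exact Complex.summable_ofReal.mpr (summable_K b hb)
  have h0 := has_pointwise_sum_fourier_series_of_summable hsum (0 : AddCircle (1:ℝ))
  simp only [funext (coeff b hb), fourier_eval_zero, smul_eq_mul, mul_one] at h0
  convert h0 using 1
  have hz : ((0 : ℝ) : AddCircle (1:ℝ)) = (0 : AddCircle (1:ℝ)) := by norm_num
  rw [show (G b) (0 : AddCircle (1:ℝ)) = F b 0 from by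
    rw [← hz, show ⇑(G b) = AddCircle.liftIco (1:ℝ) 0 (F b) from rfl,
      AddCircle.liftIco_coe_apply (by norm_num)]]
  unfold F
  rw [show (2*π*b*((0:ℝ) - 1/2)) = -(π*b) by ring, ← Complex.ofReal_exp, ← Complex.ofReal_exp,
    ← Complex.ofReal_add, Real.cosh_eq]
  norm_num
  ring_nf

lemma hasSum_athalf (b : ℝ) (hb : 0 < b) :
    HasSum (fun n : ℤ => ((K b n : ℝ) : ℂ) * (-1)^n) (2 : ℂ) := by
  have hsum : Summable (fourierCoeff (⇑(G b))) := by
    rw [funext (coeff b hb)]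
    exact Complex.summable_ofReal.mpr (summable_K b hb)
  have h0 := has_pointwise_sum_fourier_series_of_summable hsum (((1/2 : ℝ)) : AddCircle (1:ℝ))
  have hf : ∀ i : ℤ, fourier i (((1/2:ℝ)) : AddCircle (1:ℝ)) = (-1:ℂ)^i := by
    intro i
    rw [fourier_coe_apply, show 2*(π:ℂ)*Complex.I*(i:ℂ)*((1/2:ℝ):ℂ)/((1:ℝ):ℂ)
        = (i:ℤ) * ((π:ℂ)*Complex.I) from by push_cast; ring, Complex.exp_int_mul,
      Complex.exp_pi_mul_I]
  simp only [funext (coeff b hb), hf, smul_eq_mul] at h0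
  convert h0 using 1
  rw [show ⇑(G b) = AddCircle.liftIco (1:ℝ) 0 (F b) from rfl,
    AddCircle.liftIco_coe_apply (by norm_num)]
  unfold F
  norm_num

lemma hasSum_odd_int (b : ℝ) (hb : 0 < b) :
    HasSum (fun n : ℤ => K b (2*n+1)) (Real.cosh (π*b) - 1) := by
  have h2 := ((hasSum_at0 b hb).sub (hasSum_athalf b hb)).div_const 2
  set g : ℤ → ℂ := fun i => (((K b i : ℝ):ℂ) - ((K b i : ℝ):ℂ) * (-1)^i)/2 with hg
  have hodd : ∀ n : ℤ, g (2*n+1) = ((K b (2*n+1) : ℝ) : ℂ) := by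
    intro n
    rw [hg]
    simp only []
    rw [Odd.neg_one_zpow ⟨n, by ring⟩]
    ring
  have heven : ∀ x ∉ Set.range (fun n : ℤ => 2*n+1), g x = 0 := by
    intro x hx
    have hex : ∃ k : ℤ, x = 2*k := by
      rcases Int.even_or_odd x with ⟨k, hk⟩ | ⟨k, hk⟩
      · exact ⟨k, by omega⟩
      · exact absurd ⟨k, show 2*k+1 = x by omega⟩ hx
    obtain ⟨k, rfl⟩ := hex
    rw [hg]
    simp only []
    rw [Even.neg_one_zpow ⟨k, by ring⟩]
    ring
  have hinj : Function.Injective (fun n : ℤ => 2*n+1) := fun a b h => by simp only [] at h; omega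
  have h4 := (hinj.hasSum_iff heven).mpr h2
  have h5 : HasSum (fun n : ℤ => ((K b (2*n+1) : ℝ) : ℂ))
      (((Real.cosh (π*b) - 1 : ℝ)) : ℂ) := by
    rw [show (((Real.cosh (π*b) - 1 : ℝ)) : ℂ) = (((2*Real.cosh (π*b) :ℝ):ℂ) - 2)/2 from by
      push_cast; ring]
    exact HasSum.congr_fun h4 (fun n => (hodd n).symm)
  exact Complex.hasSum_ofReal.mp h5

lemma hasSum_half (b : ℝ) (hb : 0 < b) :
    HasSum (fun n : ℤ => (1:ℝ)/(((n:ℝ)+1/2)^2 + b^2/4)) ((2*π/b) * Real.tanh (π*b/2)) := by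
  have hπ : (0:ℝ) < π := Real.pi_pos
  have hs : 0 < Real.sinh (π*b) := (Real.sinh_pos_iff).mpr (by positivity)
  have h6 := (hasSum_odd_int b hb).mul_left (2*π/(b*Real.sinh (π*b)))
  have hfun : ∀ n : ℤ, (2*π/(b*Real.sinh (π*b))) * K b (2*n+1)
      = 1/(((n:ℝ)+1/2)^2 + b^2/4) := by
    intro n
    unfold K
    push_cast
    rw [div_mul_div_comm, div_eq_div_iff (by positivity) (by positivity)]
    ring
  have hc : 0 < Real.cosh (π*b/2) := Real.cosh_pos _
  have hs2 : Real.sinh (π*b) = 2 * Real.sinh (π*b/2) * Real.cosh (π*b/2) := by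
    have := Real.sinh_two_mul (π*b/2)
    rwa [show 2*(π*b/2) = π*b by ring] at this
  have hc2 : Real.cosh (π*b) = 2 * Real.cosh (π*b/2)^2 - 1 := by
    have := Real.cosh_two_mul (π*b/2)
    rw [show 2*(π*b/2) = π*b by ring, Real.sinh_sq] at this
    rw [this]
    ring
  have hval2 : Real.cosh (π*b) - 1 = Real.sinh (π*b) * Real.tanh (π*b/2) := by
    rw [Real.tanh_eq_sinh_div_cosh, hs2, hc2]
    field_simp
    linear_combination 2 * Real.cosh_sq_sub_sinh_sq (π*b/2)
  have hval : (2*π/(b*Real.sinh (π*b))) * (Real.cosh (π*b) - 1)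
      = (2*π/b) * Real.tanh (π*b/2) := by
    rw [hval2]
    field_simp
  rw [hval] at h6
  exact HasSum.congr_fun h6 (fun n => (hfun n).symm)

end LevineAux

end

theorem levine_series :
    Summable (fun n : ℕ => (1 : ℝ) / (1 + n * (n + 1) / 2)) ∧
    ∑' n : ℕ, (1 : ℝ) / (1 + n * (n + 1) / 2)
      = (2 * π / Real.sqrt 7) * Real.tanh (Real.sqrt 7 * π / 2) := by
  have hb : (0:ℝ) < Real.sqrt 7 := Real.sqrt_pos.mpr (by norm_num)
  have hb2 : Real.sqrt 7 ^ 2 = 7 := Real.sq_sqrt (by norm_num)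
  have hhalf := LevineAux.hasSum_half (Real.sqrt 7) hb
  rw [show Real.sqrt 7^2/4 = 7/4 from by rw [hb2], show π * Real.sqrt 7/2 = Real.sqrt 7 * π / 2 from by ring] at hhalf
  have hfs : Summable (fun n : ℕ => (1 : ℝ) / (1 + n * (n + 1) / 2)) := by
    have h0 : Summable (fun n : ℕ => 1/((n:ℝ)^2+2)) := LevineAux.base_summable 2 (by norm_num)
    refine Summable.of_nonneg_of_le (fun n => by positivity) (fun n => ?_) (h0.mul_left 2)
    have hn : (0:ℝ) ≤ (n:ℝ) := n.cast_nonneg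
    rw [mul_one_div, div_le_div_iff₀ (by positivity) (by positivity)]
    nlinarith
  refine ⟨hfs, ?_⟩
  have hS := hfs.hasSum
  set u : ℤ → ℝ := fun n => 1/(((n:ℝ)+1/2)^2 + 7/4) with hu
  have h_nat : HasSum (fun n : ℕ => u (n:ℤ)) ((∑' n : ℕ, (1 : ℝ) / (1 + n * (n + 1) / 2))/2) := by
    refine HasSum.congr_fun (hS.div_const 2) (fun n => ?_)
    rw [hu]
    simp only []
    rw [div_div, div_eq_div_iff (by positivity) (by positivity)]
    push_cast
    ring
  have h_neg : HasSum (fun n : ℕ => u (-((n:ℤ)+1)))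
      ((∑' n : ℕ, (1 : ℝ) / (1 + n * (n + 1) / 2))/2) := by
    refine HasSum.congr_fun (hS.div_const 2) (fun n => ?_)
    rw [hu]
    simp only []
    rw [div_div, div_eq_div_iff (by positivity) (by positivity)]
    push_cast
    ring
  have h_tot := h_nat.of_nat_of_neg_add_one h_neg
  have := hhalf.unique h_tot
  linarith
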